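/- Optimal K-prior exact reconstruction: let Φ^⊤ = U S V^⊤ be a compact SVD of rank K of the feature matrix, memory M* = {u_1,…,u_K} the left singular vectors, and weights β* = D_u^{-1} S V^⊤ d_x where d_x ∈ ℝ^N has entries h(φ_i^⊤w) − h(φ_i^⊤w*) and D_u is diagonal with entries h(u_j^⊤w) − h(u_j^⊤w*) (assumed nonzero). Then Σ_{j=1}^K β*_j u_j (h(u_j^⊤w) − h(u_j^⊤w*)) + δ(w − w*) = Σ_{i∈X} φ_i (h(φ_i^⊤w) − h(φ_i^⊤w*)) + δ(w − w*), which equals ∇ℓ̄(w) when w* is a stationary point of ℓ̄. -/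

import Mathlib

open RealInnerProductSpace

/-- Optimal K-prior exact reconstruction: let `Φ^⊤ = U S V^⊤` be a compact SVD of rank
`K` (i.e. `φ_i = Σ_j s_j V_{ij} u_j`), memory `M* = {u_1,…,u_K}` the left singular
vectors, and weights `β*_j = D_u(j)⁻¹ s_j Σ_i V_{ij} d_x(i)` where `d_x(i) =
h(φ_i^⊤w) − h(φ_i^⊤w*)` and `D_u(j) = h(u_j^⊤w) − h(u_j^⊤w*)` (nonzero). Then
`Σ_j β*_j (h(u_j^⊤w) − h(u_j^⊤w*)) u_j + δ(w − w*) = Σ_i d_x(i) φ_i + δ(w − w*)`,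
which equals `∇ℓ̄(w)` since `w*` is a stationary point of `ℓ̄`. -/
theorem stmt12 {P N K : ℕ}
    (φ : Fin N → EuclideanSpace ℝ (Fin P)) (y : Fin N → ℝ)
    (u : Fin K → EuclideanSpace ℝ (Fin P)) (s : Fin K → ℝ) (V : Fin N → Fin K → ℝ)
    (hSVD : ∀ i, φ i = ∑ j, (s j * V i j) • u j)
    (A h : ℝ → ℝ) (hA : ∀ x, HasDerivAt A (h x) x)
    (δ : ℝ) (hδ : 0 < δ)
    (wstar w : EuclideanSpace ℝ (Fin P))
    (hstat : ∑ i, (h ⟪φ i, wstar⟫ - y i) • φ i + δ • wstar = 0)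
    (dx : Fin N → ℝ) (hdx : ∀ i, dx i = h ⟪φ i, w⟫ - h ⟪φ i, wstar⟫)
    (Du : Fin K → ℝ) (hDu : ∀ j, Du j = h ⟪u j, w⟫ - h ⟪u j, wstar⟫)
    (hDu0 : ∀ j, Du j ≠ 0)
    (β : Fin K → ℝ) (hβ : ∀ j, β j = (Du j)⁻¹ * (s j * ∑ i, V i j * dx i)) :
    (∑ j, (β j * Du j) • u j + δ • (w - wstar)
        = ∑ i, dx i • φ i + δ • (w - wstar)) ∧
    HasGradientAt
      (fun w => ∑ i, (-(y i) * ⟪φ i, w⟫ + A ⟪φ i, w⟫) + (δ / 2) * ‖w‖ ^ 2)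
      (∑ j, (β j * Du j) • u j + δ • (w - wstar)) w := by
  have hβD : ∀ j, β j * Du j = s j * ∑ i, V i j * dx i := by
    intro j
    rw [hβ]
    field_simp
    rw [mul_comm (Du j) (s j), mul_assoc, mul_div_assoc, mul_div_cancel_left₀ _ (hDu0 j)]
  have hpart1 : ∑ j, (β j * Du j) • u j = ∑ i, dx i • φ i := by
    calc ∑ j, (β j * Du j) • u j
        = ∑ j, ∑ i, (dx i * (s j * V i j)) • u j := by
          refine Finset.sum_congr rfl fun j _ => ?_
          rw [hβD j, Finset.mul_sum, Finset.sum_smul]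
          refine Finset.sum_congr rfl fun i _ => ?_
          ring_nf
      _ = ∑ i, ∑ j, (dx i * (s j * V i j)) • u j := Finset.sum_comm
      _ = ∑ i, dx i • φ i := by
          refine Finset.sum_congr rfl fun i _ => ?_
          rw [hSVD i, Finset.smul_sum]
          refine Finset.sum_congr rfl fun j _ => ?_
          rw [mul_smul]
  refine ⟨by rw [hpart1], ?_⟩
  -- rewrite the gradient using stationarity
  have hgrad : ∑ j, (β j * Du j) • u j + δ • (w - wstar)
      = ∑ i, (h ⟪φ i, w⟫ - y i) • φ i + δ • w := by
    rw [hpart1]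
    have : ∑ i, dx i • φ i
        = ∑ i, (h ⟪φ i, w⟫ - y i) • φ i - ∑ i, (h ⟪φ i, wstar⟫ - y i) • φ i := by
      rw [← Finset.sum_sub_distrib]
      refine Finset.sum_congr rfl fun i _ => ?_
      rw [hdx i, ← sub_smul]
      ring_nf
    rw [this, smul_sub]
    have h0 : ∑ i, (h ⟪φ i, wstar⟫ - y i) • φ i = -(δ • wstar) := by
      linear_combination (norm := abel) hstat
    rw [h0]
    abel
  rw [hgrad]
  rw [hasGradientAt_iff_hasFDerivAt]
  have hFD : HasFDerivAt
      (fun w : EuclideanSpace ℝ (Fin P) =>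
        ∑ i, (-(y i) * ⟪φ i, w⟫ + A ⟪φ i, w⟫) + (δ / 2) * ‖w‖ ^ 2)
      ((∑ i, ((-(y i)) • innerSL ℝ (φ i) + h ⟪φ i, w⟫ • innerSL ℝ (φ i)))
        + (δ / 2) • (2 • innerSL ℝ w)) w := by
    refine HasFDerivAt.add (HasFDerivAt.fun_sum fun i _ => ?_) ?_
    · exact HasFDerivAt.add
        (((innerSL ℝ (φ i)).hasFDerivAt).const_mul (-(y i)))
        ((hA ⟪φ i, w⟫).comp_hasFDerivAt w ((innerSL ℝ (φ i)).hasFDerivAt))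
    · exact ((hasStrictFDerivAt_norm_sq w).hasFDerivAt).const_mul (δ / 2)
  refine hFD.congr_fderiv ?_
  ext v
  simp only [ContinuousLinearMap.add_apply, ContinuousLinearMap.coe_sum',
    Finset.sum_apply, ContinuousLinearMap.smul_apply, innerSL_apply_apply,
    ContinuousLinearMap.coe_smul', Pi.smul_apply, InnerProductSpace.toDual_apply_apply,
    inner_add_left, sum_inner, real_inner_smul_left, smul_eq_mul, nsmul_eq_mul,
    Nat.cast_ofNat]
  have hs : (∑ x : Fin N, (-y x * ⟪φ x, v⟫ + h ⟪φ x, w⟫ * ⟪φ x, v⟫))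
      = ∑ x : Fin N, (h ⟪φ x, w⟫ - y x) * ⟪φ x, v⟫ :=
    Finset.sum_congr rfl fun i _ => by ring
  rw [hs]
  ring
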